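/- Let R be a subring of the ring of rational numbers. A map of spectra which is both an R-equivalence and an R-fibration is a stable equivalence and a stable fibration (i.e. an acyclic fibration in the Bousfield–Friedlander stable model structure); consequently it has the right lifting property with respect to all cofibrations. -/

import Mathlib

open CategoryTheory CategoryTheory.Limits

universe u

noncomputable section

/-- `f` is a retract of `g`: there are morphisms exhibiting the square of `f` as a
retract of the square of `g`. -/
structure RetractOf {C : Type u} [Category.{u} C] {X Y X' Y' : C}
    (f : X ⟶ Y) (g : X' ⟶ Y') : Type u where
  iX : X ⟶ X'
  rX : X' ⟶ X
  iY : Y ⟶ Y'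
  rY : Y' ⟶ Y
  retract_left : iX ≫ rX = 𝟙 X
  retract_right : iY ≫ rY = 𝟙 Y
  comm_top : iX ≫ g = f ≫ iY
  comm_bot : g ≫ rY = rX ≫ f

/-- A (Quillen closed) model structure on a category `C`: classes of weak equivalences,
cofibrations and fibrations satisfying the model category axioms MC2–MC5
(MC1, bicompleteness, is imposed separately). -/
structure ModelStructure (C : Type u) [Category.{u} C] where
  we : MorphismProperty C
  cof : MorphismProperty C
  fib : MorphismProperty C
  we_of_iso : ∀ {X Y : C} (f : X ⟶ Y), IsIso f → we f
  we_comp : ∀ {X Y Z : C} (f : X ⟶ Y) (g : Y ⟶ Z), we f → we g → we (f ≫ g)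
  we_of_comp_left : ∀ {X Y Z : C} (f : X ⟶ Y) (g : Y ⟶ Z), we g → we (f ≫ g) → we f
  we_of_comp_right : ∀ {X Y Z : C} (f : X ⟶ Y) (g : Y ⟶ Z), we f → we (f ≫ g) → we g
  we_retract : ∀ {X Y X' Y' : C} {f : X ⟶ Y} {g : X' ⟶ Y'}, RetractOf f g → we g → we f
  cof_retract : ∀ {X Y X' Y' : C} {f : X ⟶ Y} {g : X' ⟶ Y'}, RetractOf f g → cof g → cof f
  fib_retract : ∀ {X Y X' Y' : C} {f : X ⟶ Y} {g : X' ⟶ Y'}, RetractOf f g → fib g → fib f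
  lifting_acof_fib : ∀ {A B X Y : C} (i : A ⟶ B) (p : X ⟶ Y), cof i → we i → fib p →
    HasLiftingProperty i p
  lifting_cof_afib : ∀ {A B X Y : C} (i : A ⟶ B) (p : X ⟶ Y), cof i → fib p → we p →
    HasLiftingProperty i p
  factor_acof_fib : ∀ {X Y : C} (f : X ⟶ Y), ∃ (Z : C) (i : X ⟶ Z) (p : Z ⟶ Y),
    cof i ∧ we i ∧ fib p ∧ i ≫ p = f
  factor_cof_afib : ∀ {X Y : C} (f : X ⟶ Y), ∃ (Z : C) (i : X ⟶ Z) (p : Z ⟶ Y),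
    cof i ∧ fib p ∧ we p ∧ i ≫ p = f

/-- An object is cofibrant if the map from the initial object is a cofibration. -/
def ModelStructure.Cofibrant {C : Type u} [Category.{u} C] [HasInitial C]
    (M : ModelStructure C) (X : C) : Prop :=
  M.cof (initial.to X)

/-- An object is fibrant if the map to the terminal object is a fibration. -/
def ModelStructure.Fibrant {C : Type u} [Category.{u} C] [HasTerminal C]
    (M : ModelStructure C) (X : C) : Prop :=
  M.fib (terminal.from X)

/-- The homotopy category of a model structure: the localization of the underlying
category at the class of weak equivalences. -/
abbrev ModelStructure.Ho {C : Type u} [Category.{u} C] (M : ModelStructure C) :=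
  M.we.Localization
/-- An additive map `f : A →+ B` induces an isomorphism after tensoring with the
subring `R ⊆ ℚ`, i.e. `R ⊗ f : R ⊗ A → R ⊗ B` is bijective. -/
def IsRTensorIso (R : Subring ℚ) {A B : Type u} [AddCommGroup A] [AddCommGroup B]
    (f : A →+ B) : Prop :=
  Function.Bijective (LinearMap.lTensor (↥R) f.toIntLinearMap)

/-- An abelian group is `R`-local (for `R ⊆ ℚ`) if it admits an `R`-module structure
compatible with its `ℤ`-module structure. -/
def IsRLocalGroup (R : Subring ℚ) (A : Type u) [AddCommGroup A] : Prop :=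
  ∃ m : Module (↥R) A, ∀ (n : ℤ) (a : A), (letI := m; ((n : ↥R) • a)) = n • a
/-- The Bousfield–Friedlander category of spectra, together with its basic
homotopy-theoretic structure: spectra are sequences of pointed simplicial sets with
structure maps `S¹ ∧ Xₙ → Xₙ₊₁`; `pi n` are the stable homotopy group functors
`π_n X = colim_i π_{i+n}|X_i|`; `cof` are the cofibrations (levelwise "injective"
maps in the Bousfield–Friedlander sense); `levelFib`/`levelWe` are the level
fibrations and level equivalences; `isOmega` singles out the Ω-spectra; `sphere` is
the sphere spectrum; and `stable` is the Bousfield–Friedlander stable model structure,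
whose weak equivalences are the π₊-isomorphisms, whose cofibrations are `cof`, and
whose fibrations are characterized by the right lifting property against acyclic
cofibrations. -/
structure SpectraData : Type (u + 1) where
  Sp : Type u
  [cat : Category.{u} Sp]
  [hz : HasZeroObject Sp]
  [hl : HasLimits Sp]
  [hc : HasColimits Sp]
  /-- the homotopy group functors `π_n` -/
  pi : ℤ → Sp ⥤ AddCommGrpCat.{u}
  /-- cofibrations of spectra -/
  cof : MorphismProperty Sp
  /-- level fibrations -/
  levelFib : MorphismProperty Sp
  /-- level equivalences -/
  levelWe : MorphismProperty Sp
  /-- the property of being an Ω-spectrum -/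
  isOmega : Sp → Prop
  /-- the sphere spectrum -/
  sphere : Sp
  /-- the Bousfield–Friedlander stable model structure -/
  stable : ModelStructure Sp
  stable_cof : stable.cof = cof
  stable_we : ∀ {X Y : Sp} (f : X ⟶ Y), stable.we f ↔
    ∀ n : ℤ, Function.Bijective ((pi n).map f)
  stable_fib : ∀ {X Y : Sp} (f : X ⟶ Y), stable.fib f ↔
    ∀ {A B : Sp} (i : A ⟶ B), cof i → stable.we i → HasLiftingProperty i f
  /-- the stable acyclic fibrations are exactly the level acyclic fibrations -/
  acyclic_fib_iff_level : ∀ {X Y : Sp} (f : X ⟶ Y),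
    (stable.fib f ∧ stable.we f) ↔ (levelFib f ∧ levelWe f)
  /-- level equivalences are stable equivalences -/
  stable_we_of_levelWe : ∀ {X Y : Sp} (f : X ⟶ Y), levelWe f → stable.we f
  /-- stable fibrations are level fibrations -/
  levelFib_of_stable_fib : ∀ {X Y : Sp} (f : X ⟶ Y), stable.fib f → levelFib f
  /-- the stably fibrant objects are exactly the Ω-spectra -/
  fibrant_iff_isOmega : ∀ X : Sp, stable.Fibrant X ↔ isOmega X
  /-- the sphere spectrum is cofibrant -/
  sphere_cofibrant : stable.Cofibrant sphere

attribute [instance] SpectraData.cat SpectraData.hz SpectraData.hl SpectraData.hc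

/-- A map of spectra is an `R`-equivalence if it induces isomorphisms on homotopy
groups after tensoring with `R`. -/
def SpectraData.REq (S : SpectraData.{u}) (R : Subring ℚ) : MorphismProperty S.Sp :=
  fun _ _ f => ∀ n : ℤ, IsRTensorIso R ((S.pi n).map f).hom

/-- A map of spectra is an `R`-fibration if it has the right lifting property with
respect to all maps that are both cofibrations and `R`-equivalences. -/
def SpectraData.RFib (S : SpectraData.{u}) (R : Subring ℚ) : MorphismProperty S.Sp :=
  fun _ _ f => ∀ {A B : S.Sp} (i : A ⟶ B), S.cof i → S.REq R i → HasLiftingProperty i f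


private lemma aux_bij_lTensor (R : Subring ℚ) {A B : Type u} [AddCommGroup A] [AddCommGroup B]
    (f : A →+ B) (hf : Function.Bijective f) : IsRTensorIso R f := by
  let e : A ≃ₗ[ℤ] B := LinearEquiv.ofBijective f.toIntLinearMap hf
  have h : LinearMap.lTensor (↥R) f.toIntLinearMap = (e.lTensor (↥R) : _ →ₗ[ℤ] _) := rfl
  show Function.Bijective (LinearMap.lTensor (↥R) f.toIntLinearMap)
  rw [h]
  exact (e.lTensor (↥R)).bijective

private lemma aux_cancel (R : Subring ℚ) {A B C : Type u} [AddCommGroup A] [AddCommGroup B]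
    [AddCommGroup C] (f : A →+ B) (g : B →+ C)
    (hg : IsRTensorIso R g) (hgf : IsRTensorIso R (g.comp f)) : IsRTensorIso R f := by
  have h : LinearMap.lTensor (↥R) (g.comp f).toIntLinearMap
      = (LinearMap.lTensor (↥R) g.toIntLinearMap).comp
        (LinearMap.lTensor (↥R) f.toIntLinearMap) := by
    rw [← LinearMap.lTensor_comp]; rfl
  have hgf' : Function.Bijective ((LinearMap.lTensor (↥R) g.toIntLinearMap).comp
      (LinearMap.lTensor (↥R) f.toIntLinearMap)) := h ▸ hgf
  constructor
  · exact Function.Injective.of_comp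
      (f := ⇑(LinearMap.lTensor (↥R) g.toIntLinearMap)) hgf'.injective
  · intro y
    obtain ⟨x, hx⟩ := hgf'.surjective (LinearMap.lTensor (↥R) g.toIntLinearMap y)
    exact ⟨x, hg.injective hx⟩

/-- **`R`-local acyclic fibrations are stable acyclic fibrations** (claim (b) in
Section 4). A map of spectra which is both an `R`-equivalence and an `R`-fibration is a
stable equivalence and a stable fibration; consequently it has the right lifting
property with respect to all cofibrations. -/
theorem stable_acyclic_fib_of_rEq_rFib (S : SpectraData.{u}) (R : Subring ℚ)
    {X Y : S.Sp} (f : X ⟶ Y) (h₁ : S.REq R f) (h₂ : S.RFib R f) :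
    (S.stable.we f ∧ S.stable.fib f) ∧
      ∀ {A B : S.Sp} (i : A ⟶ B), S.cof i → HasLiftingProperty i f := by
  -- stable equivalences are `R`-equivalences
  have hWREq : ∀ {A B : S.Sp} (g : A ⟶ B), S.stable.we g → S.REq R g := by
    intro A B g hg n
    exact aux_bij_lTensor R _ ((S.stable_we g).mp hg n)
  -- factor f as a cofibration followed by a stable acyclic fibration
  obtain ⟨Z, i, p, hicof, hpfib, hpwe, hfac⟩ := S.stable.factor_cof_afib f
  -- i is an R-equivalence by 2-out-of-3
  have hiREq : S.REq R i := by
    intro n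
    have hf := h₁ n
    have hcomp : ((S.pi n).map f).hom = ((S.pi n).map p).hom.comp ((S.pi n).map i).hom := by
      rw [← hfac, (S.pi n).map_comp i p]; rfl
    rw [hcomp] at hf
    exact aux_cancel R _ _ (hWREq p hpwe n) hf
  have hicof' : S.cof i := by rw [← S.stable_cof]; exact hicof
  haveI : HasLiftingProperty i f := h₂ i hicof' hiREq
  have sq : CommSq (𝟙 X) i f p := ⟨by simp [hfac]⟩
  let ret : RetractOf f p :=
    { iX := i, rX := sq.lift, iY := 𝟙 Y, rY := 𝟙 Y
      retract_left := sq.fac_left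
      retract_right := by simp
      comm_top := by simp [hfac]
      comm_bot := by simp [sq.fac_right] }
  have hwe := S.stable.we_retract ret hpwe
  have hfib := S.stable.fib_retract ret hpfib
  refine ⟨⟨hwe, hfib⟩, ?_⟩
  intro A B j hj
  exact S.stable.lifting_cof_afib j f (by rw [S.stable_cof]; exact hj) hfib hwe
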